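/- Let H be a finite-dimensional real inner product space, let β > 0, and let g : H → ℝ be a convex, differentiable function whose gradient ∇g is β-Lipschitz. Then for all x, y ∈ H, ⟨x − y, ∇g(x) − ∇g(y)⟩ ≥ (1/β)‖∇g(x) − ∇g(y)‖² (Baillon–Haddad cocoercivity inequality). -/

import Mathlib

open Filter Topology

noncomputable section

/-- Composition of a gradient with a line: directional derivative. -/
lemma line_deriv {H : Type*} [NormedAddCommGroup H] [InnerProductSpace ℝ H] [CompleteSpace H]
    (g : H → ℝ) (g' : H → H) (hg_grad : ∀ z : H, HasGradientAt g (g' z) z)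
    (z v : H) (t : ℝ) :
    HasDerivAt (fun s : ℝ => g (z + s • v)) (inner ℝ (g' (z + t • v)) v : ℝ) t := by
  have h1 : HasDerivAt (fun s : ℝ => z + s • v) v t := by
    simpa using ((hasDerivAt_id t).smul_const v).const_add z
  have h2 := (hg_grad (z + t • v)).hasFDerivAt
  have := h2.comp_hasDerivAt t h1
  simp only [InnerProductSpace.toDual_apply_apply] at this; exact this

/-- Gradient inequality for convex functions. -/
lemma convex_lower {H : Type*} [NormedAddCommGroup H] [InnerProductSpace ℝ H] [CompleteSpace H]
    (g : H → ℝ) (g' : H → H)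
    (hg_convex : ConvexOn ℝ Set.univ g)
    (hg_grad : ∀ z : H, HasGradientAt g (g' z) z)
    (z w : H) : g z + (inner ℝ (g' z) (w - z) : ℝ) ≤ g w := by
  set v := w - z with hv
  set φ : ℝ → ℝ := fun s => g (z + s • v) with hφdef
  have hd := (line_deriv g g' hg_grad z v 0)
  rw [hasDerivAt_iff_tendsto_slope] at hd
  simp only [zero_smul, add_zero] at hd
  have hd' : Tendsto (slope φ 0) (𝓝[>] 0) (𝓝 (inner ℝ (g' z) v : ℝ)) :=
    hd.mono_left (nhdsWithin_mono _ (fun t ht => ne_of_gt ht))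
  have hle : ∀ᶠ t in 𝓝[>] (0:ℝ), slope φ 0 t ≤ g w - g z := by
    filter_upwards [Ioo_mem_nhdsGT_of_mem (Set.left_mem_Ico.mpr one_pos)] with t ht
    have hcomb : z + t • v = (1 - t) • z + t • w := by
      rw [hv]; module
    have hcv := hg_convex.2 (Set.mem_univ z) (Set.mem_univ w)
      (by linarith [ht.2] : (0:ℝ) ≤ 1 - t) (le_of_lt ht.1) (by ring)
    rw [slope_def_field]
    have : φ t ≤ (1 - t) * g z + t * g w := by
      rw [hφdef]; simpa [hcomb] using hcv
    have hφ0 : φ 0 = g z := by simp [hφdef]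
    rw [hφ0, sub_zero, div_le_iff₀ ht.1]
    nlinarith [ht.1]
  have := le_of_tendsto hd' hle
  linarith

/-- Descent lemma for functions with Lipschitz gradient. -/
lemma descent_lemma {H : Type*} [NormedAddCommGroup H] [InnerProductSpace ℝ H] [CompleteSpace H]
    (β : ℝ) (hβ : 0 < β)
    (g : H → ℝ) (g' : H → H)
    (hg_grad : ∀ z : H, HasGradientAt g (g' z) z)
    (hg_lip : ∀ z w : H, ‖g' z - g' w‖ ≤ β * ‖z - w‖)
    (z w : H) :
    g w ≤ g z + (inner ℝ (g' z) (w - z) : ℝ) + β / 2 * ‖w - z‖ ^ 2 := by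
  set v := w - z with hv
  set d : ℝ := inner ℝ (g' z) v with hd
  set ψ : ℝ → ℝ := fun t => g (z + t • v) - t * d - β / 2 * t ^ 2 * ‖v‖ ^ 2 with hψdef
  have hψ : ∀ t : ℝ, HasDerivAt ψ
      ((inner ℝ (g' (z + t • v)) v : ℝ) - d - β * t * ‖v‖ ^ 2) t := by
    intro t
    have h1 := line_deriv g g' hg_grad z v t
    have h2 : HasDerivAt (fun t : ℝ => t * d) d t := by
      simpa using (hasDerivAt_id t).mul_const d
    have h3 : HasDerivAt (fun t : ℝ => β / 2 * t ^ 2 * ‖v‖ ^ 2)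
        (β * t * ‖v‖ ^ 2) t := by
      have := ((hasDerivAt_pow 2 t).const_mul (β / 2)).mul_const (‖v‖ ^ 2)
      convert this using 1
      exacts [rfl, rfl, by rw [show (2:ℕ) - 1 = 1 from rfl]; push_cast; ring]
    exact (h1.sub h2).sub h3
  have hmono : AntitoneOn ψ (Set.Icc 0 1) := by
    apply antitoneOn_of_deriv_nonpos (convex_Icc 0 1)
    · exact fun t _ => (hψ t).continuousAt.continuousWithinAt
    · exact fun t _ => (hψ t).differentiableAt.differentiableWithinAt
    · intro t ht
      rw [interior_Icc] at ht
      rw [(hψ t).deriv]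
      have hCS : (inner ℝ (g' (z + t • v) - g' z) v : ℝ)
          ≤ ‖g' (z + t • v) - g' z‖ * ‖v‖ := real_inner_le_norm _ _
      have hlip := hg_lip (z + t • v) z
      have hnorm : ‖z + t • v - z‖ = t * ‖v‖ := by
        rw [add_sub_cancel_left, norm_smul, Real.norm_eq_abs, abs_of_pos ht.1]
      rw [hnorm] at hlip
      have hsub : (inner ℝ (g' (z + t • v) - g' z) v : ℝ)
          = (inner ℝ (g' (z + t • v)) v : ℝ) - d := by
        rw [hd, inner_sub_left]
      nlinarith [norm_nonneg v, ht.1, mul_le_mul_of_nonneg_right hCS (norm_nonneg v),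
        mul_le_mul_of_nonneg_right hlip (norm_nonneg v)]
  have h01 := hmono (Set.left_mem_Icc.mpr zero_le_one)
    (Set.right_mem_Icc.mpr zero_le_one) zero_le_one
  have hψ1 : ψ 1 = g w - d - β / 2 * ‖v‖ ^ 2 := by
    simp [hψdef, hv]
  have hψ0 : ψ 0 = g z := by simp [hψdef]
  rw [hψ1, hψ0] at h01
  linarith

/-- Baillon–Haddad cocoercivity inequality: if `g` is convex and differentiable with a
`β`-Lipschitz gradient `g'`, then `⟨x - y, g' x - g' y⟩ ≥ ‖g' x - g' y‖²/β`. -/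
theorem baillon_haddad
    {H : Type*} [NormedAddCommGroup H] [InnerProductSpace ℝ H] [FiniteDimensional ℝ H]
    (β : ℝ) (hβ : 0 < β)
    (g : H → ℝ) (g' : H → H)
    (hg_convex : ConvexOn ℝ Set.univ g)
    (hg_grad : ∀ z : H, HasGradientAt g (g' z) z)
    (hg_lip : ∀ z w : H, ‖g' z - g' w‖ ≤ β * ‖z - w‖)
    (x y : H) :
    ‖g' x - g' y‖^2 / β ≤ (inner ℝ (x - y) (g' x - g' y) : ℝ) := by
  have key : ∀ a b : H,
      g a + (inner ℝ (g' a) (b - a) : ℝ) + ‖g' a - g' b‖ ^ 2 / (2 * β) ≤ g b := by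
    intro a b
    set u := b - β⁻¹ • (g' b - g' a) with hu
    have h1 := convex_lower g g' hg_convex hg_grad a u
    have h2 := descent_lemma β hβ g g' hg_grad hg_lip b u
    have hub : u - b = -(β⁻¹ • (g' b - g' a)) := by rw [hu]; abel
    have hnorm : ‖u - b‖ ^ 2 = β⁻¹ ^ 2 * ‖g' b - g' a‖ ^ 2 := by
      rw [hub, norm_neg, norm_smul, Real.norm_eq_abs, abs_of_pos (inv_pos.mpr hβ),
        mul_pow]
    have hinner2 : (inner ℝ (g' b) (u - b) : ℝ)
        = -(β⁻¹ * inner ℝ (g' b) (g' b - g' a)) := by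
      rw [hub, inner_neg_right, real_inner_smul_right]
    have hinner1 : (inner ℝ (g' a) (u - a) : ℝ)
        = (inner ℝ (g' a) (b - a) : ℝ) - β⁻¹ * inner ℝ (g' a) (g' b - g' a) := by
      have : u - a = (b - a) - β⁻¹ • (g' b - g' a) := by rw [hu]; abel
      rw [this, inner_sub_right, real_inner_smul_right]
    have hself : (inner ℝ (g' b) (g' b - g' a) : ℝ) - (inner ℝ (g' a) (g' b - g' a) : ℝ)
        = ‖g' b - g' a‖ ^ 2 := by
      rw [← inner_sub_left, real_inner_self_eq_norm_sq]
    rw [hnorm, hinner2] at h2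
    rw [hinner1] at h1
    have hrev : ‖g' a - g' b‖ = ‖g' b - g' a‖ := norm_sub_rev _ _
    rw [hrev]
    have hβ' : β⁻¹ * β = 1 := inv_mul_cancel₀ (ne_of_gt hβ)
    have e1 : β / 2 * (β⁻¹ ^ 2 * ‖g' b - g' a‖ ^ 2) = ‖g' b - g' a‖ ^ 2 * β⁻¹ / 2 := by
      field_simp
    have e2 : ‖g' b - g' a‖ ^ 2 / (2 * β) = ‖g' b - g' a‖ ^ 2 * β⁻¹ / 2 := by
      rw [div_eq_mul_inv, div_eq_mul_inv, mul_inv]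
      ring
    rw [e1] at h2
    rw [e2]
    nlinarith [hself]
  have k1 := key x y
  have k2 := key y x
  have hrev : ‖g' y - g' x‖ = ‖g' x - g' y‖ := norm_sub_rev _ _
  rw [hrev] at k2
  have hsum : (inner ℝ (g' x) (y - x) : ℝ) + (inner ℝ (g' y) (x - y) : ℝ)
      = -(inner ℝ (x - y) (g' x - g' y) : ℝ) := by
    simp only [inner_sub_left, inner_sub_right]
    rw [real_inner_comm x (g' x), real_inner_comm x (g' y), real_inner_comm y (g' x),
      real_inner_comm y (g' y)]
    ring
  have hdiv : ‖g' x - g' y‖ ^ 2 / β = ‖g' x - g' y‖ ^ 2 / (2 * β) + ‖g' x - g' y‖ ^ 2 / (2 * β) := by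
    field_simp; ring
  linarith
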